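/- The number of solvable sorting match puzzles of order n ≥ 2 equals 4·2^n − 4 + 2(n−1)². -/

import Mathlib

/-- A solution of the sorting match puzzle `(r, c)` of order `n`:
a bijective filling of the grid respecting all row and column labels. -/
def IsSolution (n : ℕ) (r c : Fin n → Bool) (g : Fin n × Fin n → Fin (n ^ 2)) : Prop :=
  Function.Bijective g ∧
  (∀ i : Fin n, if r i = true then StrictMono (fun j => g (i, j))
                else StrictAnti (fun j => g (i, j))) ∧
  (∀ j : Fin n, if c j = true then StrictMono (fun i => g (i, j))
                else StrictAnti (fun i => g (i, j)))

/-- Solvability of the sorting match puzzle `(r, c)`. -/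
def Solvable (n : ℕ) (r c : Fin n → Bool) : Prop :=
  ∃ g : Fin n × Fin n → Fin (n ^ 2), IsSolution n r c g

/-! ### Auxiliary machinery -/

/-- Triple-lex encoding. -/
def tl (a b c : ℕ) : ℕ ×ₗ (ℕ ×ₗ ℕ) := toLex (a, toLex (b, c))

lemma tl_lt {a b c a' b' c' : ℕ} :
    tl a b c < tl a' b' c' ↔ a < a' ∨ (a = a' ∧ (b < b' ∨ (b = b' ∧ c < c'))) := by
  unfold tl
  rw [Prod.Lex.lt_iff]
  simp [Prod.Lex.lt_iff]

lemma tl_inj {a b c a' b' c' : ℕ} :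
    tl a b c = tl a' b' c' ↔ a = a' ∧ b = b' ∧ c = c' := by
  unfold tl
  rw [toLex_inj, Prod.mk.injEq, toLex_inj, Prod.mk.injEq]

lemma exists_rank {α : Type} [LinearOrder α] (n : ℕ) (f : Fin n × Fin n → α)
    (hf : Function.Injective f) :
    ∃ g : Fin n × Fin n → Fin (n ^ 2), Function.Bijective g ∧
      ∀ p q, g p < g q ↔ f p < f q := by
  classical
  set s : Finset α := Finset.univ.image f with hs
  have hcard : s.card = n ^ 2 := by
    rw [hs, Finset.card_image_of_injective _ hf, Finset.card_univ]
    simp [sq]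
  let e := s.orderIsoOfFin hcard
  have hmem : ∀ p, f p ∈ s := fun p => by simp [hs]
  refine ⟨fun p => e.symm ⟨f p, hmem p⟩, ?_, ?_⟩
  · rw [Fintype.bijective_iff_injective_and_card]
    constructor
    · intro p q h
      apply hf
      have := e.symm.injective h
      exact congrArg Subtype.val this
    · simp [sq]
  · intro p q
    rw [e.symm.lt_iff_lt]
    exact Subtype.mk_lt_mk

/-- Building a solution from an injective line-monotone labelling into a linear order. -/
lemma solvable_of {α : Type} [LinearOrder α] {n : ℕ} {r c : Fin n → Bool}
    (f : Fin n × Fin n → α) (hf : Function.Injective f)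
    (hrow : ∀ i j j' : Fin n, j < j' →
      (if r i = true then f (i, j) < f (i, j') else f (i, j') < f (i, j)))
    (hcol : ∀ j i i' : Fin n, i < i' →
      (if c j = true then f (i, j) < f (i', j) else f (i', j) < f (i, j))) :
    Solvable n r c := by
  obtain ⟨g, hg, hlt⟩ := exists_rank n f hf
  refine ⟨g, hg, fun i => ?_, fun j => ?_⟩
  · by_cases hri : r i = true
    · rw [if_pos hri]
      intro a b hab
      rw [hlt]
      have := hrow i a b hab
      rwa [if_pos hri] at this
    · rw [if_neg hri]
      intro a b hab
      rw [hlt]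
      have := hrow i a b hab
      rwa [if_neg hri] at this
  · by_cases hcj : c j = true
    · rw [if_pos hcj]
      intro a b hab
      rw [hlt]
      have := hcol j a b hab
      rwa [if_pos hcj] at this
    · rw [if_neg hcj]
      intro a b hab
      rw [hlt]
      have := hcol j a b hab
      rwa [if_neg hcj] at this

section constructions

variable {n : ℕ} {r c : Fin n → Bool}

/-- `r` constant true. -/
lemma solv_rtrue (hr : ∀ i, r i = true) : Solvable n r c := by
  apply solvable_of (f := fun p : Fin n × Fin n =>
    tl p.2.val (if c p.2 = true then p.1.val else n - 1 - p.1.val) 0)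
  · rintro ⟨i, j⟩ ⟨i', j'⟩ h
    simp only at h
    have b1 := i.isLt; have b2 := i'.isLt; have b3 := j.isLt; have b4 := j'.isLt
    by_cases hcj : c j = true <;> by_cases hcj' : c j' = true <;>
      simp only [hcj, hcj', if_true, if_false, ite_true, ite_false, Bool.false_eq_true] at h <;>
      rw [tl_inj] at h <;>
      obtain ⟨h1, h2, -⟩ := h <;>
      obtain rfl : j = j' := Fin.ext (by omega) <;>
      first
        | exact absurd hcj hcj'
        | exact absurd hcj' hcj
        | (obtain rfl : i = i' := Fin.ext (by omega); rfl)
  · intro i j j' hjj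
    have hv : (j : ℕ) < j' := hjj
    rw [if_pos (hr i)]
    simp only
    rw [tl_lt]
    omega
  · intro j i i' hii
    have hv : (i : ℕ) < i' := hii
    have hi' : (i' : ℕ) < n := i'.isLt
    by_cases hcj : c j = true <;>
      simp only [hcj, Bool.false_eq_true, if_true, if_false, ite_true, ite_false,
        eq_self_iff_true] <;> rw [tl_lt] <;> omega

/-- `r` constant false. -/
lemma solv_rfalse (hr : ∀ i, r i = false) : Solvable n r c := by
  apply solvable_of (f := fun p : Fin n × Fin n =>
    tl (n - 1 - p.2.val) (if c p.2 = true then p.1.val else n - 1 - p.1.val) 0)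
  · rintro ⟨i, j⟩ ⟨i', j'⟩ h
    simp only at h
    have b1 := i.isLt; have b2 := i'.isLt; have b3 := j.isLt; have b4 := j'.isLt
    by_cases hcj : c j = true <;> by_cases hcj' : c j' = true <;>
      simp only [hcj, hcj', if_true, if_false, ite_true, ite_false, Bool.false_eq_true] at h <;>
      rw [tl_inj] at h <;>
      obtain ⟨h1, h2, -⟩ := h <;>
      obtain rfl : j = j' := Fin.ext (by omega) <;>
      first
        | exact absurd hcj hcj'
        | exact absurd hcj' hcj
        | (obtain rfl : i = i' := Fin.ext (by omega); rfl)
  · intro i j j' hjj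
    have hv : (j : ℕ) < j' := hjj
    have hj' : (j' : ℕ) < n := j'.isLt
    rw [if_neg (by simp [hr i])]
    simp only
    rw [tl_lt]
    omega
  · intro j i i' hii
    have hv : (i : ℕ) < i' := hii
    have hi' : (i' : ℕ) < n := i'.isLt
    by_cases hcj : c j = true <;>
      simp only [hcj, Bool.false_eq_true, if_true, if_false, ite_true, ite_false,
        eq_self_iff_true] <;> rw [tl_lt] <;> omega

/-- `c` constant true. -/
lemma solv_ctrue (hc : ∀ j, c j = true) : Solvable n r c := by
  apply solvable_of (f := fun p : Fin n × Fin n =>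
    tl p.1.val (if r p.1 = true then p.2.val else n - 1 - p.2.val) 0)
  · rintro ⟨i, j⟩ ⟨i', j'⟩ h
    simp only at h
    have b1 := i.isLt; have b2 := i'.isLt; have b3 := j.isLt; have b4 := j'.isLt
    by_cases hri : r i = true <;> by_cases hri' : r i' = true <;>
      simp only [hri, hri', if_true, if_false, ite_true, ite_false, Bool.false_eq_true] at h <;>
      rw [tl_inj] at h <;>
      obtain ⟨h1, h2, -⟩ := h <;>
      obtain rfl : i = i' := Fin.ext (by omega) <;>
      first
        | exact absurd hri hri'
        | exact absurd hri' hri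
        | (obtain rfl : j = j' := Fin.ext (by omega); rfl)
  · intro i j j' hjj
    have hv : (j : ℕ) < j' := hjj
    have hj' : (j' : ℕ) < n := j'.isLt
    by_cases hri : r i = true <;>
      simp only [hri, Bool.false_eq_true, if_true, if_false, ite_true, ite_false,
        eq_self_iff_true] <;> rw [tl_lt] <;> omega
  · intro j i i' hii
    have hv : (i : ℕ) < i' := hii
    rw [if_pos (hc j)]
    simp only
    rw [tl_lt]
    omega

/-- `c` constant false. -/
lemma solv_cfalse (hc : ∀ j, c j = false) : Solvable n r c := by
  apply solvable_of (f := fun p : Fin n × Fin n =>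
    tl (n - 1 - p.1.val) (if r p.1 = true then p.2.val else n - 1 - p.2.val) 0)
  · rintro ⟨i, j⟩ ⟨i', j'⟩ h
    simp only at h
    have b1 := i.isLt; have b2 := i'.isLt; have b3 := j.isLt; have b4 := j'.isLt
    by_cases hri : r i = true <;> by_cases hri' : r i' = true <;>
      simp only [hri, hri', if_true, if_false, ite_true, ite_false, Bool.false_eq_true] at h <;>
      rw [tl_inj] at h <;>
      obtain ⟨h1, h2, -⟩ := h <;>
      obtain rfl : i = i' := Fin.ext (by omega) <;>
      first
        | exact absurd hri hri'
        | exact absurd hri' hri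
        | (obtain rfl : j = j' := Fin.ext (by omega); rfl)
  · intro i j j' hjj
    have hv : (j : ℕ) < j' := hjj
    have hj' : (j' : ℕ) < n := j'.isLt
    by_cases hri : r i = true <;>
      simp only [hri, Bool.false_eq_true, if_true, if_false, ite_true, ite_false,
        eq_self_iff_true] <;> rw [tl_lt] <;> omega
  · intro j i i' hii
    have hv : (i : ℕ) < i' := hii
    have hi' : (i' : ℕ) < n := i'.isLt
    rw [if_neg (by simp [hc j])]
    simp only
    rw [tl_lt]
    omega

/-- Prefix-of-trues predicate: `r` has the form `A^k D^{n-k}`. -/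
def PreP {n : ℕ} (r : Fin n → Bool) : Prop :=
  ∀ i j : Fin n, i ≤ j → r j = true → r i = true

/-- Suffix-of-trues predicate: `r` has the form `D^k A^{n-k}`. -/
def SufP {n : ℕ} (r : Fin n → Bool) : Prop :=
  ∀ i j : Fin n, i ≤ j → r i = true → r j = true

/-- Both of form `A^k D^{n-k}`. -/
lemma solv_pre (hr : PreP r) (hc : PreP c) : Solvable n r c := by
  apply solvable_of (f := fun p : Fin n × Fin n =>
    if r p.1 = true then
      (if c p.2 = true then tl 0 p.1.val p.2.val else tl 3 (n - 1 - p.1.val) p.2.val)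
    else
      (if c p.2 = true then tl 2 p.1.val (n - 1 - p.2.val)
       else tl 1 (n - 1 - p.1.val) (n - 1 - p.2.val)))
  · rintro ⟨⟨i, hi⟩, ⟨j, hj⟩⟩ ⟨⟨i', hi'⟩, ⟨j', hj'⟩⟩ h
    simp only at h
    split_ifs at h <;>
      (rw [tl_inj] at h; simp only [Prod.mk.injEq, Fin.mk.injEq]; omega)
  · intro i j j' hjj
    have hv : (j : ℕ) < j' := hjj
    have hj' : (j' : ℕ) < n := j'.isLt
    have hex : ¬(¬ c j = true ∧ c j' = true) := by
      rintro ⟨h1, h2⟩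
      exact h1 (hc j j' (le_of_lt hjj) h2)
    by_cases hri : r i = true <;>
      by_cases hcj : c j = true <;>
      by_cases hcj' : c j' = true <;>
      simp only [hri, hcj, hcj', Bool.false_eq_true, if_true, if_false, ite_true, ite_false,
        eq_self_iff_true] <;>
      first
        | (rw [tl_lt]; omega)
        | (exact absurd ⟨hcj, hcj'⟩ hex)
  · intro j i i' hii
    have hv : (i : ℕ) < i' := hii
    have hi' : (i' : ℕ) < n := i'.isLt
    have hex : ¬(¬ r i = true ∧ r i' = true) := by
      rintro ⟨h1, h2⟩
      exact h1 (hr i i' (le_of_lt hii) h2)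
    by_cases hcj : c j = true <;>
      by_cases hri : r i = true <;>
      by_cases hri' : r i' = true <;>
      simp only [hri, hri', hcj, Bool.false_eq_true, if_true, if_false, ite_true, ite_false,
        eq_self_iff_true] <;>
      first
        | (rw [tl_lt]; omega)
        | (exact absurd ⟨hri, hri'⟩ hex)

/-- Both of form `D^k A^{n-k}`. -/
lemma solv_suf (hr : SufP r) (hc : SufP c) : Solvable n r c := by
  apply solvable_of (f := fun p : Fin n × Fin n =>
    if r p.1 = true then
      (if c p.2 = true then tl 3 p.1.val p.2.val else tl 1 (n - 1 - p.1.val) p.2.val)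
    else
      (if c p.2 = true then tl 0 p.1.val (n - 1 - p.2.val)
       else tl 2 (n - 1 - p.1.val) (n - 1 - p.2.val)))
  · rintro ⟨⟨i, hi⟩, ⟨j, hj⟩⟩ ⟨⟨i', hi'⟩, ⟨j', hj'⟩⟩ h
    simp only at h
    split_ifs at h <;>
      (rw [tl_inj] at h; simp only [Prod.mk.injEq, Fin.mk.injEq]; omega)
  · intro i j j' hjj
    have hv : (j : ℕ) < j' := hjj
    have hj' : (j' : ℕ) < n := j'.isLt
    have hex : ¬(c j = true ∧ ¬ c j' = true) := by
      rintro ⟨h1, h2⟩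
      exact h2 (hc j j' (le_of_lt hjj) h1)
    by_cases hri : r i = true <;>
      by_cases hcj : c j = true <;>
      by_cases hcj' : c j' = true <;>
      simp only [hri, hcj, hcj', Bool.false_eq_true, if_true, if_false, ite_true, ite_false,
        eq_self_iff_true] <;>
      first
        | (rw [tl_lt]; omega)
        | (exact absurd ⟨hcj, hcj'⟩ hex)
  · intro j i i' hii
    have hv : (i : ℕ) < i' := hii
    have hi' : (i' : ℕ) < n := i'.isLt
    have hex : ¬(r i = true ∧ ¬ r i' = true) := by
      rintro ⟨h1, h2⟩
      exact h2 (hr i i' (le_of_lt hii) h1)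
    by_cases hcj : c j = true <;>
      by_cases hri : r i = true <;>
      by_cases hri' : r i' = true <;>
      simp only [hri, hri', hcj, Bool.false_eq_true, if_true, if_false, ite_true, ite_false,
        eq_self_iff_true] <;>
      first
        | (rw [tl_lt]; omega)
        | (exact absurd ⟨hri, hri'⟩ hex)

end constructions

section necessity

variable {n : ℕ} {r c : Fin n → Bool}

lemma forbidden1 (h : Solvable n r c) {i i' j j' : Fin n} (hii : i < i') (hjj : j < j') :
    ¬(r i = true ∧ r i' = false ∧ c j = false ∧ c j' = true) := by
  rintro ⟨h1, h2, h3, h4⟩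
  obtain ⟨g, _, hrow, hcol⟩ := h
  have A := hrow i; rw [if_pos h1] at A
  have B := hcol j'; rw [if_pos h4] at B
  have C := hrow i'; rw [if_neg (by simp [h2])] at C
  have D := hcol j; rw [if_neg (by simp [h3])] at D
  have l1 : g (i, j) < g (i, j') := A hjj
  have l2 : g (i, j') < g (i', j') := B hii
  have l3 : g (i', j') < g (i', j) := C hjj
  have l4 : g (i', j) < g (i, j) := D hii
  exact absurd (lt_trans (lt_trans (lt_trans l1 l2) l3) l4) (lt_irrefl _)

lemma forbidden2 (h : Solvable n r c) {i i' j j' : Fin n} (hii : i < i') (hjj : j < j') :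
    ¬(r i = false ∧ r i' = true ∧ c j = true ∧ c j' = false) := by
  rintro ⟨h1, h2, h3, h4⟩
  obtain ⟨g, _, hrow, hcol⟩ := h
  have A := hrow i; rw [if_neg (by simp [h1])] at A
  have B := hcol j; rw [if_pos h3] at B
  have C := hrow i'; rw [if_pos h2] at C
  have D := hcol j'; rw [if_neg (by simp [h4])] at D
  have l1 : g (i, j') < g (i, j) := A hjj
  have l2 : g (i, j) < g (i', j) := B hii
  have l3 : g (i', j) < g (i', j') := C hjj
  have l4 : g (i', j') < g (i, j') := D hii
  exact absurd (lt_trans (lt_trans (lt_trans l1 l2) l3) l4) (lt_irrefl _)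

/-- Constancy predicate. -/
def CstP {n : ℕ} (r : Fin n → Bool) : Prop := (∀ i, r i = true) ∨ (∀ i, r i = false)

lemma nonconst_wits (h : ¬ CstP r) :
    (∃ i, r i = true) ∧ (∃ i, r i = false) := by
  unfold CstP at h
  push_neg at h
  obtain ⟨h1, h2⟩ := h
  obtain ⟨a, ha⟩ := h1
  obtain ⟨b, hb⟩ := h2
  exact ⟨⟨b, by simpa using hb⟩, ⟨a, by simpa using ha⟩⟩

lemma not_pre_wit (h : ¬ PreP r) : ∃ i i' : Fin n, i < i' ∧ r i = false ∧ r i' = true := by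
  unfold PreP at h
  push_neg at h
  obtain ⟨i, i', hle, h2, h1⟩ := h
  refine ⟨i, i', lt_of_le_of_ne hle ?_, by simpa using h1, h2⟩
  rintro rfl
  exact h1 h2

lemma pre_and_suf (hp : PreP r) (hs : SufP r) (hc : ¬ CstP r) : False := by
  obtain ⟨⟨a, ha⟩, ⟨b, hb⟩⟩ := nonconst_wits hc
  rcases le_total a b with h | h
  · have := hs a b h ha
    simp [hb] at this
  · have := hp b a h ha
    simp [hb] at this

/-- Full characterization of solvability. -/
lemma solvable_iff :
    Solvable n r c ↔ (CstP r ∨ CstP c ∨ (PreP r ∧ PreP c) ∨ (SufP r ∧ SufP c)) := by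
  constructor
  · intro h
    by_cases hcr : CstP r
    · exact Or.inl hcr
    by_cases hcc : CstP c
    · exact Or.inr (Or.inl hcc)
    refine Or.inr (Or.inr ?_)
    by_cases hpr : PreP r
    · by_cases hpc : PreP c
      · exact Or.inl ⟨hpr, hpc⟩
      · obtain ⟨j, j', hjj, hcj, hcj'⟩ := not_pre_wit hpc
        have hsr : SufP r := by
          intro i i' hle hi
          by_contra hri'
          have hri' : r i' = false := by simpa using hri'
          have hlt : i < i' := lt_of_le_of_ne hle (by rintro rfl; simp [hi] at hri')
          exact forbidden1 h hlt hjj ⟨hi, hri', hcj, hcj'⟩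
        exact (pre_and_suf hpr hsr hcr).elim
    · obtain ⟨i, i', hii, hri, hri'⟩ := not_pre_wit hpr
      have hsc : SufP c := by
        intro j j' hle hj
        by_contra hcj'
        have hcj' : c j' = false := by simpa using hcj'
        have hlt : j < j' := lt_of_le_of_ne hle (by rintro rfl; simp [hj] at hcj')
        exact forbidden2 h hii hlt ⟨hri, hri', hj, hcj'⟩
      have hpc : ¬ PreP c := fun hpc => pre_and_suf hpc hsc hcc
      obtain ⟨j, j', hjj, hcj, hcj'⟩ := not_pre_wit hpc
      have hsr : SufP r := by
        intro a a' hle ha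
        by_contra hra'
        have hra' : r a' = false := by simpa using hra'
        have hlt : a < a' := lt_of_le_of_ne hle (by rintro rfl; simp [ha] at hra')
        exact forbidden1 h hlt hjj ⟨ha, hra', hcj, hcj'⟩
      exact Or.inr ⟨hsr, hsc⟩
  · rintro (h | h | ⟨h1, h2⟩ | ⟨h1, h2⟩)
    · rcases h with h | h
      · exact solv_rtrue h
      · exact solv_rfalse h
    · rcases h with h | h
      · exact solv_ctrue h
      · exact solv_cfalse h
    · exact solv_pre h1 h2
    · exact solv_suf h1 h2

end necessity

section counting

variable {n : ℕ}

instance : DecidablePred (CstP (n := n)) := fun r => by unfold CstP; infer_instance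
instance : DecidablePred (PreP (n := n)) := fun r => by unfold PreP; infer_instance
instance : DecidablePred (SufP (n := n)) := fun r => by unfold SufP; infer_instance

lemma card_filter_lt (m : ℕ) (hm : m ≤ n) :
    (Finset.univ.filter fun i : Fin n => (i : ℕ) < m).card = m := by
  have heq : (Finset.univ.filter fun i : Fin n => (i : ℕ) < m) =
      (Finset.range m).attachFin
        (fun x hx => lt_of_lt_of_le (Finset.mem_range.mp hx) hm) := by
    ext i
    simp [Finset.mem_attachFin]
  rw [heq, Finset.card_attachFin, Finset.card_range]

lemma prep_eq (r : Fin n → Bool) (hr : PreP r) (i : Fin n) :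
    r i = decide ((i : ℕ) < (Finset.univ.filter fun j : Fin n => r j = true).card) := by
  set k := (Finset.univ.filter fun j : Fin n => r j = true).card with hk
  by_cases h : r i = true
  · have sub : (Finset.univ.filter fun j : Fin n => (j : ℕ) < (i : ℕ) + 1) ⊆
        Finset.univ.filter fun j : Fin n => r j = true := by
      intro j hj
      simp only [Finset.mem_filter] at hj ⊢
      exact ⟨hj.1, hr j i (by omega) h⟩
    have hcard := Finset.card_le_card sub
    rw [card_filter_lt ((i : ℕ) + 1) i.isLt] at hcard
    rw [h]
    simp only [← hk] at hcard
    simp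
    omega
  · have h' : r i = false := by simpa using h
    have sub : (Finset.univ.filter fun j : Fin n => r j = true) ⊆
        Finset.univ.filter fun j : Fin n => (j : ℕ) < (i : ℕ) := by
      intro j hj
      simp only [Finset.mem_filter] at hj ⊢
      refine ⟨hj.1, ?_⟩
      by_contra hc
      push_neg at hc
      have := hr i j (by omega) hj.2
      simp [h'] at this
    have hcard := Finset.card_le_card sub
    rw [card_filter_lt (i : ℕ) (le_of_lt i.isLt)] at hcard
    rw [h']
    simp only [← hk] at hcard
    simp
    omega

lemma card_prep_nonconst (hn : 1 ≤ n) :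
    (Finset.univ.filter fun r : Fin n → Bool => ¬ CstP r ∧ PreP r).card = n - 1 := by
  classical
  have himg : (Finset.univ.filter fun r : Fin n → Bool => ¬ CstP r ∧ PreP r) =
      (Finset.Ioo 0 n).image (fun k => fun i : Fin n => decide ((i : ℕ) < k)) := by
    ext r
    simp only [Finset.mem_filter, Finset.mem_image, Finset.mem_Ioo, Finset.mem_univ, true_and]
    constructor
    · rintro ⟨hnc, hp⟩
      set k := (Finset.univ.filter fun j : Fin n => r j = true).card with hk
      refine ⟨k, ⟨?_, ?_⟩, ?_⟩
      · obtain ⟨⟨a, ha⟩, _⟩ := nonconst_wits hnc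
        have ham : a ∈ Finset.univ.filter fun j : Fin n => r j = true := by simp [ha]
        have := Finset.card_pos.mpr ⟨a, ham⟩
        omega
      · obtain ⟨_, ⟨b, hb⟩⟩ := nonconst_wits hnc
        by_contra hcon
        push_neg at hcon
        have := prep_eq r hp b
        rw [hb] at this
        have hlt : (b : ℕ) < k := lt_of_lt_of_le b.isLt hcon
        simp [hlt] at this
        omega
      · funext i
        exact (prep_eq r hp i).symm
    · rintro ⟨k, ⟨hk0, hkn⟩, rfl⟩
      refine ⟨?_, ?_⟩
      · intro hcon
        rcases hcon with hcon | hcon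
        · have := hcon ⟨k, hkn⟩
          simp at this
        · have := hcon ⟨0, by omega⟩
          simp at this
          omega
      · intro i j hle hj
        simp only [decide_eq_true_eq] at hj ⊢
        have : (i : ℕ) ≤ (j : ℕ) := hle
        omega
  have hinj : Set.InjOn (fun k => fun i : Fin n => decide ((i : ℕ) < k))
      (Finset.Ioo 0 n : Finset ℕ) := by
    intro a ha b hb hab
    simp only [Finset.coe_Ioo, Set.mem_Ioo] at ha hb
    by_contra hne
    rcases Nat.lt_or_ge a b with h | h
    · have := congrFun hab ⟨a, by omega⟩
      simp at this
      omega
    · have h' : b < a := by omega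
      have := congrFun hab ⟨b, by omega⟩
      simp at this
      omega
  rw [himg, Finset.card_image_of_injOn hinj, Nat.card_Ioo]
  omega

lemma sufp_iff_prep_comp (r : Fin n → Bool) : SufP r ↔ PreP (fun i => r i.rev) := by
  constructor
  · intro h i j hle hj
    exact h j.rev i.rev (by rw [Fin.rev_le_rev]; exact hle) hj
  · intro h i j hle hi
    have := h j.rev i.rev (by rw [Fin.rev_le_rev]; exact hle)
    simp only [Fin.rev_rev] at this
    exact this hi

lemma cstp_comp_rev (r : Fin n → Bool) : CstP (fun i => r i.rev) ↔ CstP r := by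
  unfold CstP
  constructor <;> intro h <;> rcases h with h | h
  · left; intro i; have := h i.rev; simpa using this
  · right; intro i; have := h i.rev; simpa using this
  · left; intro i; exact h i.rev
  · right; intro i; exact h i.rev

lemma card_sufp_nonconst (hn : 1 ≤ n) :
    (Finset.univ.filter fun r : Fin n → Bool => ¬ CstP r ∧ SufP r).card = n - 1 := by
  classical
  rw [← card_prep_nonconst hn]
  apply Finset.card_bij (fun r _ => fun i : Fin n => r i.rev)
  · intro r hr
    simp only [Finset.mem_filter, Finset.mem_univ, true_and] at hr ⊢
    exact ⟨fun hcon => hr.1 ((cstp_comp_rev r).mp hcon), (sufp_iff_prep_comp r).mp hr.2⟩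
  · intro a ha b hb hab
    funext i
    have := congrFun hab i.rev
    simpa using this
  · intro b hb
    simp only [Finset.mem_filter, Finset.mem_univ, true_and] at hb
    refine ⟨fun i => b i.rev, ?_, ?_⟩
    · simp only [Finset.mem_filter, Finset.mem_univ, true_and]
      constructor
      · intro hcon
        exact hb.1 ((cstp_comp_rev b).mp hcon)
      · rw [sufp_iff_prep_comp]
        have hrr : (fun i : Fin n => (fun i : Fin n => b i.rev) i.rev) = b := by
          funext i
          exact congrArg b (Fin.rev_rev i)
        rw [hrr]
        exact hb.2
    · funext i
      exact congrArg b (Fin.rev_rev i)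

lemma card_cst (hn : 1 ≤ n) :
    (Finset.univ.filter fun r : Fin n → Bool => CstP r).card = 2 := by
  classical
  have heq : (Finset.univ.filter fun r : Fin n → Bool => CstP r) =
      {fun _ => true, fun _ => false} := by
    ext r
    simp only [Finset.mem_filter, Finset.mem_univ, true_and, Finset.mem_insert,
      Finset.mem_singleton]
    unfold CstP
    constructor
    · rintro (h | h)
      · left; funext i; exact h i
      · right; funext i; exact h i
    · rintro (rfl | rfl)
      · left; intro; rfl
      · right; intro; rfl
  rw [heq]
  rw [Finset.card_insert_of_notMem, Finset.card_singleton]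
  simp only [Finset.mem_singleton]
  intro h
  have := congrFun h ⟨0, by omega⟩
  simp at this

lemma card_fun_bool : (Finset.univ : Finset (Fin n → Bool)).card = 2 ^ n := by
  rw [Finset.card_univ]
  simp [Fintype.card_fun]

lemma card_filter_prod (P Q : (Fin n → Bool) → Prop) [DecidablePred P] [DecidablePred Q] :
    (Finset.univ.filter fun p : (Fin n → Bool) × (Fin n → Bool) => P p.1 ∧ Q p.2).card
      = (Finset.univ.filter P).card * (Finset.univ.filter Q).card := by
  rw [← Finset.univ_product_univ, Finset.filter_product, Finset.card_product]

end counting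

/-- The number of solvable sorting match puzzles of order `n ≥ 2`. -/
theorem card_solvable_puzzles (n : ℕ) (hn : 2 ≤ n) :
    Nat.card {p : (Fin n → Bool) × (Fin n → Bool) // Solvable n p.1 p.2} =
      4 * 2 ^ n - 4 + 2 * (n - 1) ^ 2 := by
  classical
  have hchar : ∀ p : (Fin n → Bool) × (Fin n → Bool), Solvable n p.1 p.2 ↔
      ((CstP p.1 ∧ True) ∨ ((¬ CstP p.1 ∧ CstP p.2) ∨
       (((¬ CstP p.1 ∧ PreP p.1) ∧ (¬ CstP p.2 ∧ PreP p.2)) ∨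
       ((¬ CstP p.1 ∧ SufP p.1) ∧ (¬ CstP p.2 ∧ SufP p.2))))) := by
    intro p
    rw [solvable_iff]
    by_cases h1 : CstP p.1 <;> by_cases h2 : CstP p.2 <;> simp [h1, h2]
  have e : {p : (Fin n → Bool) × (Fin n → Bool) // Solvable n p.1 p.2} ≃
      {p : (Fin n → Bool) × (Fin n → Bool) // (CstP p.1 ∧ True) ∨ ((¬ CstP p.1 ∧ CstP p.2) ∨
       (((¬ CstP p.1 ∧ PreP p.1) ∧ (¬ CstP p.2 ∧ PreP p.2)) ∨
       ((¬ CstP p.1 ∧ SufP p.1) ∧ (¬ CstP p.2 ∧ SufP p.2))))} :=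
    Equiv.subtypeEquivRight hchar
  rw [Nat.card_congr e, Nat.card_eq_fintype_card, Fintype.card_subtype]
  have hn1 : 1 ≤ n := by omega
  have hset : (Finset.univ.filter fun p : (Fin n → Bool) × (Fin n → Bool) =>
      (CstP p.1 ∧ True) ∨ ((¬ CstP p.1 ∧ CstP p.2) ∨
       (((¬ CstP p.1 ∧ PreP p.1) ∧ (¬ CstP p.2 ∧ PreP p.2)) ∨
       ((¬ CstP p.1 ∧ SufP p.1) ∧ (¬ CstP p.2 ∧ SufP p.2))))) =
      ((Finset.univ.filter (fun p : (Fin n → Bool) × (Fin n → Bool) => CstP p.1 ∧ True)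
        ∪ Finset.univ.filter (fun p : (Fin n → Bool) × (Fin n → Bool) =>
            ¬ CstP p.1 ∧ CstP p.2))
        ∪ Finset.univ.filter (fun p : (Fin n → Bool) × (Fin n → Bool) =>
            (¬ CstP p.1 ∧ PreP p.1) ∧ (¬ CstP p.2 ∧ PreP p.2)))
        ∪ Finset.univ.filter (fun p : (Fin n → Bool) × (Fin n → Bool) =>
            (¬ CstP p.1 ∧ SufP p.1) ∧ (¬ CstP p.2 ∧ SufP p.2)) := by
    ext p
    simp only [Finset.mem_filter, Finset.mem_union, Finset.mem_univ, true_and]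
    tauto
  rw [hset]
  have d12 : Disjoint
      (Finset.univ.filter (fun p : (Fin n → Bool) × (Fin n → Bool) => CstP p.1 ∧ True))
      (Finset.univ.filter (fun p : (Fin n → Bool) × (Fin n → Bool) =>
        ¬ CstP p.1 ∧ CstP p.2)) := by
    rw [Finset.disjoint_left]
    intro p hp hq
    simp only [Finset.mem_filter] at hp hq
    exact hq.2.1 hp.2.1
  have d123 : Disjoint
      (Finset.univ.filter (fun p : (Fin n → Bool) × (Fin n → Bool) => CstP p.1 ∧ True)
        ∪ Finset.univ.filter (fun p : (Fin n → Bool) × (Fin n → Bool) =>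
            ¬ CstP p.1 ∧ CstP p.2))
      (Finset.univ.filter (fun p : (Fin n → Bool) × (Fin n → Bool) =>
        (¬ CstP p.1 ∧ PreP p.1) ∧ (¬ CstP p.2 ∧ PreP p.2))) := by
    rw [Finset.disjoint_left]
    intro p hp hq
    simp only [Finset.mem_union, Finset.mem_filter] at hp hq
    rcases hp with hp | hp
    · exact hq.2.1.1 hp.2.1
    · exact hq.2.2.1 hp.2.2
  have d1234 : Disjoint
      ((Finset.univ.filter (fun p : (Fin n → Bool) × (Fin n → Bool) => CstP p.1 ∧ True)
        ∪ Finset.univ.filter (fun p : (Fin n → Bool) × (Fin n → Bool) =>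
            ¬ CstP p.1 ∧ CstP p.2))
        ∪ Finset.univ.filter (fun p : (Fin n → Bool) × (Fin n → Bool) =>
            (¬ CstP p.1 ∧ PreP p.1) ∧ (¬ CstP p.2 ∧ PreP p.2)))
      (Finset.univ.filter (fun p : (Fin n → Bool) × (Fin n → Bool) =>
        (¬ CstP p.1 ∧ SufP p.1) ∧ (¬ CstP p.2 ∧ SufP p.2))) := by
    rw [Finset.disjoint_left]
    intro p hp hq
    simp only [Finset.mem_union, Finset.mem_filter] at hp hq
    rcases hp with (hp | hp) | hp
    · exact hq.2.1.1 hp.2.1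
    · exact hq.2.2.1 hp.2.2
    · exact pre_and_suf hp.2.1.2 hq.2.1.2 hp.2.1.1
  rw [Finset.card_union_of_disjoint d1234, Finset.card_union_of_disjoint d123,
    Finset.card_union_of_disjoint d12]
  have hc1 : (Finset.univ.filter (fun p : (Fin n → Bool) × (Fin n → Bool) =>
      CstP p.1 ∧ True)).card = 2 * 2 ^ n := by
    rw [card_filter_prod (fun r => CstP r) (fun _ => True), card_cst hn1,
      Finset.filter_true_of_mem (fun _ _ => trivial), Finset.card_univ]
    simp [Fintype.card_fun]
  have hnotcst : (Finset.univ.filter fun r : Fin n → Bool => ¬ CstP r).card = 2 ^ n - 2 := by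
    rw [Finset.filter_not, Finset.card_sdiff_of_subset (Finset.filter_subset _ _), card_cst hn1,
      Finset.card_univ]
    simp [Fintype.card_fun]
  have hc2 : (Finset.univ.filter (fun p : (Fin n → Bool) × (Fin n → Bool) =>
      ¬ CstP p.1 ∧ CstP p.2)).card = (2 ^ n - 2) * 2 := by
    rw [card_filter_prod (fun r => ¬ CstP r) (fun r => CstP r), card_cst hn1, hnotcst]
  have hc3 : (Finset.univ.filter (fun p : (Fin n → Bool) × (Fin n → Bool) =>
      (¬ CstP p.1 ∧ PreP p.1) ∧ (¬ CstP p.2 ∧ PreP p.2))).card = (n - 1) * (n - 1) := by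
    rw [card_filter_prod (fun r => ¬ CstP r ∧ PreP r) (fun r => ¬ CstP r ∧ PreP r),
      card_prep_nonconst hn1]
  have hc4 : (Finset.univ.filter (fun p : (Fin n → Bool) × (Fin n → Bool) =>
      (¬ CstP p.1 ∧ SufP p.1) ∧ (¬ CstP p.2 ∧ SufP p.2))).card = (n - 1) * (n - 1) := by
    rw [card_filter_prod (fun r => ¬ CstP r ∧ SufP r) (fun r => ¬ CstP r ∧ SufP r),
      card_sufp_nonconst hn1]
  rw [hc1, hc2, hc3, hc4]
  have h2n : 2 ≤ 2 ^ n := by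
    calc 2 = 2 ^ 1 := rfl
    _ ≤ 2 ^ n := Nat.pow_le_pow_right (by omega) hn1
  have hsq : (n - 1) ^ 2 = (n - 1) * (n - 1) := sq (n - 1)
  rw [hsq]
  generalize 2 ^ n = a at *
  omega
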